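/- Suppose relations f, R on a set V satisfy T1[f], transitivity of R, and the induction principle. Then the GoOut axiom holds: for all sets A, B ⊆ V, if every f-edge leaving A enters B (∀u v, u ∈ A → v ∉ A → f(u,v) → v ∈ B), then for all u ∈ A and v ∉ A with R(u,v), there exists w ∈ B with R(u,w) and R(w,v). -/
import Mathlib

theorem stmt_6 {V : Type*} (f R : V → V → Prop)
    (hT1 : ∀ u v : V, R u v ↔ (u = v ∨ ∃ w, f u w ∧ R w v))
    (htrans : ∀ u v w : V, R u w → R w v → R u v)
    (hInd : ∀ (P : V → Prop) (z : V),
      (P z ∧ ∀ u v, P u → f u v → P v) → ∀ u, R z u → P u) :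
    ∀ A B : Set V,
      (∀ u v, u ∈ A → v ∉ A → f u v → v ∈ B) →
      ∀ u v, u ∈ A → v ∉ A → R u v →
        ∃ w, w ∈ B ∧ R u w ∧ R w v := by
  intro A B hEdge u v hA hvA hR
  have hrefl : ∀ x : V, R x x := fun x => (hT1 x x).mpr (Or.inl rfl)
  have hstep : ∀ x y : V, f x y → R x y := fun x y hf =>
    (hT1 x y).mpr (Or.inr ⟨y, hf, hrefl y⟩)
  have key := hInd (fun x => (x ∈ A ∧ R u x) ∨ ∃ w, w ∈ B ∧ R u w ∧ R w x) u
    ⟨Or.inl ⟨hA, hrefl u⟩, by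
      rintro x y (⟨hxA, hux⟩ | ⟨w, hwB, huw, hwx⟩) hf
      · by_cases hyA : y ∈ A
        · exact Or.inl ⟨hyA, htrans u y x hux (hstep x y hf)⟩
        · exact Or.inr ⟨y, hEdge x y hxA hyA hf, htrans u y x hux (hstep x y hf), hrefl y⟩
      · exact Or.inr ⟨w, hwB, huw, htrans w y x hwx (hstep x y hf)⟩⟩ v hR
  rcases key with ⟨hvA', _⟩ | h
  · exact absurd hvA' hvA
  · exact h
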